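/- Let p_n = 1 − 2/n for integers n ≥ 3, and suppose Q : ℕ → ℝ satisfies Q(2) = 1 and, for every n ≥ 3, the implicit equation Q(n) = p_n²·Q(n−1) + (1 − p_n)·(1 − (1 − Q(n))·(1 − p_n·Q(n−1))). Then for every n ≥ 2, Q(n) = 1/(2·H_n − 2), where H_n = ∑_{k=1}^n 1/k is the n-th harmonic number. -/

import Mathlib

open Finset

lemma harm_ge (m : ℕ) (hm : 2 ≤ m) :
    (3/2 : ℝ) ≤ ∑ k ∈ Finset.Icc 1 m, (1 : ℝ) / k := by
  have hsub : (Finset.Icc 1 2 : Finset ℕ) ⊆ Finset.Icc 1 m :=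
    Finset.Icc_subset_Icc le_rfl hm
  have h := Finset.sum_le_sum_of_subset_of_nonneg hsub
    (fun i _ _ => by positivity : ∀ i ∈ Finset.Icc 1 m,
      i ∉ (Finset.Icc 1 2 : Finset ℕ) → (0:ℝ) ≤ 1 / i)
  have h2 : ∑ k ∈ (Finset.Icc 1 2 : Finset ℕ), (1 : ℝ) / k = 3/2 := by
    norm_num [Finset.sum_Icc_succ_top]
  linarith

/-- If `Q(2) = 1` and `Q` satisfies the FPZ implicit success-probability
recurrence with `p_n = 1 − 2/n`, then `Q(n) = 1/(2H_n − 2)` for all `n ≥ 2`. -/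
theorem fpz_success_probability
    (Q : ℕ → ℝ) (hQ2 : Q 2 = 1)
    (hrec : ∀ n : ℕ, 3 ≤ n →
      Q n = (1 - 2 / (n : ℝ)) ^ 2 * Q (n - 1) +
        (1 - (1 - 2 / (n : ℝ))) *
          (1 - (1 - Q n) * (1 - (1 - 2 / (n : ℝ)) * Q (n - 1)))) :
    ∀ n : ℕ, 2 ≤ n →
      Q n = 1 / (2 * (∑ k ∈ Finset.Icc 1 n, (1 : ℝ) / k) - 2) := by
  intro n hn
  induction n, hn using Nat.le_induction with
  | base =>
    rw [hQ2]
    norm_num [Finset.sum_Icc_succ_top]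
  | succ n hn ih =>
    have h := hrec (n + 1) (by omega)
    simp only [Nat.add_sub_cancel] at h
    push_cast at h
    set t : ℝ := (n : ℝ) + 1 with htdef
    have ht3 : (3 : ℝ) ≤ t := by
      have : (3 : ℕ) ≤ n + 1 := by omega
      rw [htdef]; exact_mod_cast this
    have ht : (0 : ℝ) < t := by linarith
    have hp : (0 : ℝ) < 1 - 2 / t := by
      rw [sub_pos, div_lt_one ht]; linarith
    set H : ℝ := ∑ k ∈ Finset.Icc 1 n, (1 : ℝ) / k with hH
    have hHsucc : ∑ k ∈ Finset.Icc 1 (n + 1), (1 : ℝ) / k = H + 1 / t := by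
      rw [Finset.sum_Icc_succ_top (by omega)]
      push_cast
      ring
    have hHge : (3/2 : ℝ) ≤ H := harm_ge n hn
    have hD : (0 : ℝ) < 2 * H - 2 := by linarith
    have key : (1 - 2 / t) * (Q (n + 1) * (1 + 2 / t * Q n)) =
        (1 - 2 / t) * Q n := by linear_combination h
    have key2 : Q (n + 1) * (1 + 2 / t * Q n) = Q n :=
      mul_left_cancel₀ (ne_of_gt hp) key
    rw [ih] at key2
    have hD2 : (0 : ℝ) < 2 * (H + 1 / t) - 2 := by
      have : (0:ℝ) < 1 / t := by positivity
      linarith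
    have hmain : Q (n + 1) * (2 * (H + 1 / t) - 2) = 1 := by
      have hH1 : H - 1 ≠ 0 := ne_of_gt (by linarith)
      have hD' : 2 * H - 2 ≠ 0 := ne_of_gt hD
      have step : Q (n + 1) * (2 * (H + 1 / t) - 2) =
          (2 * H - 2) * (Q (n + 1) * (1 + 2 / t * (1 / (2 * H - 2)))) := by
        field_simp
        ring
      rw [step, key2]
      field_simp
    rw [hHsucc, eq_div_iff (ne_of_gt hD2), hmain]
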